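/- arXiv:1004.1500 — 2 statements merged into one kernel-verified Lean document; each statement's English description precedes it below -/
import Mathlib

section
/- Assume Condition A1 holds for the QVE Mx = a + b(x,x). Define the sequence x₀ = 0, x_{k+1} = M⁻¹(a + b(x_k, x_k)). Then (x_k) is entrywise nondecreasing, it converges to a limit x* ≥ 0 which is a solution of the QVE, and x* ≤ s for every nonnegative solution s of the QVE; in particular the QVE has a minimal nonnegative solution. -/
open Matrix Filter Topology

/-- The spectral radius of a real square matrix: the supremum of the norms of
its complex eigenvalues. -/
noncomputable def specRad {n : ℕ} (A : Matrix (Fin n) (Fin n) ℝ) : ℝ :=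
  sSup {r : ℝ | ∃ μ ∈ spectrum ℂ (A.map (Complex.ofReal)), ‖μ‖ = r}

/-- An M-matrix: a matrix of the form `s • 1 - P` with `P ≥ 0` and `ρ(P) ≤ s`. -/
def IsMMat {n : ℕ} (A : Matrix (Fin n) (Fin n) ℝ) : Prop :=
  ∃ (s : ℝ) (P : Matrix (Fin n) (Fin n) ℝ),
    (∀ i j, 0 ≤ P i j) ∧ specRad P ≤ s ∧ A = s • (1 : Matrix (Fin n) (Fin n) ℝ) - P

/-- A nonsingular M-matrix: an M-matrix that is invertible. -/
def IsNsMMat {n : ℕ} (A : Matrix (Fin n) (Fin n) ℝ) : Prop :=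
  IsMMat A ∧ IsUnit A.det

/-- A linear map `l : ℝⁿ → ℝᵐ` is weakly positive if `l x ≥ 0` and `l x ≠ 0`
whenever `x ≥ 0` and `x ≠ 0` (all inequalities entrywise). -/
def WeaklyPos {n m : ℕ} (l : (Fin n → ℝ) →ₗ[ℝ] (Fin m → ℝ)) : Prop :=
  ∀ x : Fin n → ℝ, 0 ≤ x → x ≠ 0 → 0 ≤ l x ∧ l x ≠ 0

open ENNReal

lemma norm_le_specRad {n : ℕ} (A : Matrix (Fin n) (Fin n) ℝ) {μ : ℂ}
    (hμ : μ ∈ spectrum ℂ (A.map Complex.ofReal)) : ‖μ‖ ≤ specRad A := by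
  have hco : IsCompact (spectrum ℂ (A.map Complex.ofReal)) := by
    rw [← AlgEquiv.spectrum_eq (Matrix.toEuclideanCLM (𝕜 := ℂ) (n := Fin n))]
    exact spectrum.isCompact _
  have hbdd : BddAbove {r : ℝ | ∃ μ ∈ spectrum ℂ (A.map (Complex.ofReal)), ‖μ‖ = r} := by
    have : {r : ℝ | ∃ μ ∈ spectrum ℂ (A.map (Complex.ofReal)), ‖μ‖ = r}
        = Norm.norm '' (spectrum ℂ (A.map Complex.ofReal)) := by
      ext r; simp [Set.mem_image, eq_comm]
    rw [this]
    exact (hco.image continuous_norm).bddAbove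
  exact le_csSup hbdd ⟨μ, hμ, rfl⟩

lemma coord_le_norm {n : ℕ} (v : EuclideanSpace ℂ (Fin n)) (i : Fin n) : ‖v i‖ ≤ ‖v‖ := by
  rw [EuclideanSpace.norm_eq]
  have : ‖v i‖ = Real.sqrt (‖v i‖ ^ 2) := by
    rw [Real.sqrt_sq (norm_nonneg _)]
  rw [this]
  apply Real.sqrt_le_sqrt
  exact Finset.single_le_sum (f := fun j => ‖v j‖ ^ 2) (fun j _ => by positivity) (Finset.mem_univ i)

lemma abs_entry_le_opNorm {n : ℕ} (A : Matrix (Fin n) (Fin n) ℝ) (i j : Fin n) :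
    |A i j| ≤ ‖Matrix.toEuclideanCLM (𝕜 := ℂ) (n := Fin n) (A.map Complex.ofReal)‖ := by
  set T := Matrix.toEuclideanCLM (𝕜 := ℂ) (n := Fin n) (A.map Complex.ofReal) with hT
  have he : ‖T ((WithLp.equiv 2 _).symm (Pi.single j 1))‖ ≤ ‖T‖ := by
    calc ‖T ((WithLp.equiv 2 _).symm (Pi.single j 1))‖
        ≤ ‖T‖ * ‖((WithLp.equiv 2 _).symm (Pi.single j (1:ℂ)) : EuclideanSpace ℂ (Fin n))‖ :=
          T.le_opNorm _
      _ = ‖T‖ := by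
          rw [show ((WithLp.equiv 2 _).symm (Pi.single j (1:ℂ)) : EuclideanSpace ℂ (Fin n))
              = EuclideanSpace.single j 1 from rfl, EuclideanSpace.norm_single]
          rw [norm_one, mul_one]
  have hTv : T ((WithLp.equiv 2 _).symm (Pi.single j 1))
      = (WithLp.equiv 2 _).symm (Matrix.toLin' (A.map Complex.ofReal) (Pi.single j 1)) := by
    rw [hT]; rfl
  have hcoord : ‖(T ((WithLp.equiv 2 _).symm (Pi.single j 1)) : EuclideanSpace ℂ (Fin n)) i‖
      ≤ ‖T ((WithLp.equiv 2 _).symm (Pi.single j 1))‖ := coord_le_norm _ i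
  have : (T ((WithLp.equiv 2 _).symm (Pi.single j 1)) : EuclideanSpace ℂ (Fin n)) i
      = ((A i j : ℝ) : ℂ) := by
    rw [hTv]
    show (Matrix.toLin' (A.map Complex.ofReal) (Pi.single j 1)) i = _
    simp [Matrix.toLin'_apply, Matrix.map_apply]
  rw [this] at hcoord
  calc |A i j| = ‖((A i j : ℝ) : ℂ)‖ := by rw [Complex.norm_real]; rfl
    _ ≤ _ := le_trans hcoord he

lemma neumann {n : ℕ} (P : Matrix (Fin n) (Fin n) ℝ) (hP : ∀ i j, 0 ≤ P i j)
    {t : ℝ} (ht0 : 0 < t) (ht : specRad P < t) :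
    IsUnit (t • (1 : Matrix (Fin n) (Fin n) ℝ) - P).det ∧
      ∀ i j, 0 ≤ (t • (1 : Matrix (Fin n) (Fin n) ℝ) - P)⁻¹ i j := by
  set Q : Matrix (Fin n) (Fin n) ℝ := t⁻¹ • P with hQdef
  have hQ : ∀ i j, 0 ≤ Q i j := fun i j =>
    mul_nonneg (inv_nonneg.mpr ht0.le) (hP i j)
  have hQpow : ∀ k, ∀ i j, 0 ≤ (Q ^ k) i j := by
    intro k
    induction k with
    | zero => intro i j; by_cases h : i = j <;> simp [h, Matrix.one_apply]
    | succ k ih =>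
      intro i j
      rw [pow_succ, Matrix.mul_apply]
      exact Finset.sum_nonneg fun l _ => mul_nonneg (ih i l) (hQ l j)
  -- complexification
  have hmap : Q.map Complex.ofReal = ((t : ℂ))⁻¹ • (P.map Complex.ofReal) := by
    ext i j
    simp [Matrix.map_apply, hQdef, Matrix.smul_apply]
  have hspecQ : ∀ μ ∈ spectrum ℂ (Q.map Complex.ofReal), ‖μ‖ ≤ t⁻¹ * specRad P := by
    intro μ hμ
    rw [hmap] at hμ
    have htne : ((t : ℂ))⁻¹ ≠ 0 := by
      simp [Complex.ofReal_ne_zero, ht0.ne']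
    rw [show ((t : ℂ))⁻¹ • (P.map Complex.ofReal)
        = (Units.mk0 _ htne : ℂˣ) • (P.map Complex.ofReal) from rfl,
      spectrum.unit_smul_eq_smul] at hμ
    obtain ⟨ν, hν, rfl⟩ := hμ
    show ‖((Units.mk0 _ htne : ℂˣ) • ν : ℂ)‖ ≤ t⁻¹ * specRad P
    have : ‖((Units.mk0 _ htne : ℂˣ) • ν : ℂ)‖ = t⁻¹ * ‖ν‖ := by
      simp only [Units.smul_def, smul_eq_mul, Units.val_mk0, norm_mul, norm_inv,
        Complex.norm_real, Real.norm_eq_abs, abs_of_pos ht0]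
    rw [this]
    exact mul_le_mul_of_nonneg_left (norm_le_specRad P hν) (inv_nonneg.mpr ht0.le)
  set T := Matrix.toEuclideanCLM (𝕜 := ℂ) (n := Fin n) (Q.map Complex.ofReal) with hTdef
  have hspecT : spectralRadius ℂ T ≤ ENNReal.ofReal (t⁻¹ * specRad P) := by
    rw [spectralRadius]
    refine iSup₂_le fun μ hμ => ?_
    rw [AlgEquiv.spectrum_eq (Matrix.toEuclideanCLM (𝕜 := ℂ) (n := Fin n))] at hμ
    exact le_trans (le_of_eq (ofReal_norm μ).symm) (ENNReal.ofReal_le_ofReal (hspecQ μ hμ))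
  set c : ℝ := (max (t⁻¹ * specRad P) 0 + 1) / 2 with hcdef
  have hc0 : 0 < c := by positivity
  have hc1 : c < 1 := by
    have : max (t⁻¹ * specRad P) 0 < 1 := by
      rcases max_cases (t⁻¹ * specRad P) 0 with ⟨h, _⟩ | ⟨h, _⟩
      · rw [h]; rw [inv_mul_lt_iff₀ ht0]; simpa using ht
      · rw [h]; norm_num
    linarith
  have hmaxlt : max (t⁻¹ * specRad P) 0 < c := by
    have : max (t⁻¹ * specRad P) 0 < 1 := by linarith [hc1, hcdef]
    rw [hcdef]; linarith
  have hρc : spectralRadius ℂ T < ENNReal.ofReal c := by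
    calc spectralRadius ℂ T ≤ ENNReal.ofReal (t⁻¹ * specRad P) := hspecT
      _ ≤ ENNReal.ofReal (max (t⁻¹ * specRad P) 0) := ENNReal.ofReal_le_ofReal (le_max_left _ _)
      _ < ENNReal.ofReal c := by
          rw [ENNReal.ofReal_lt_ofReal_iff hc0]
          exact hmaxlt
  have htend := spectrum.pow_nnnorm_pow_one_div_tendsto_nhds_spectralRadius T
  have heven : ∀ᶠ k : ℕ in atTop, ((‖T ^ k‖₊ : ℝ≥0∞)) ^ (1 / (k : ℝ)) < ENNReal.ofReal c :=
    htend.eventually_lt_const hρc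
  have hnorm : ∀ᶠ k in atTop, ‖T ^ k‖ ≤ c ^ k := by
    filter_upwards [heven, eventually_ge_atTop 1] with k hk hk1
    have hkne : (k : ℝ) ≠ 0 := Nat.cast_ne_zero.mpr (by omega)
    have h2 : (((‖T ^ k‖₊ : ℝ≥0∞)) ^ (1 / (k : ℝ))) ^ (k : ℝ)
        < (ENNReal.ofReal c) ^ (k : ℝ) :=
      ENNReal.rpow_lt_rpow hk (by positivity)
    rw [← ENNReal.rpow_mul, one_div_mul_cancel hkne, ENNReal.rpow_one] at h2
    rw [ENNReal.rpow_natCast, ← ENNReal.ofReal_pow hc0.le, ← enorm_eq_nnnorm, ← ofReal_norm,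
      ENNReal.ofReal_lt_ofReal_iff_of_nonneg (norm_nonneg _)] at h2
    exact h2.le
  have hTk : ∀ k : ℕ, T ^ k = Matrix.toEuclideanCLM (𝕜 := ℂ) (n := Fin n)
      ((Q ^ k).map Complex.ofReal) := by
    intro k
    have hmm : ∀ (A : Matrix (Fin n) (Fin n) ℝ),
        A.map Complex.ofReal = Complex.ofRealHom.mapMatrix A := fun _ => rfl
    rw [hTdef, ← map_pow, hmm, hmm, ← map_pow]
  have hentry : ∀ᶠ k : ℕ in atTop, ∀ i j, |(Q ^ k) i j| ≤ c ^ k := by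
    filter_upwards [hnorm] with k hk i j
    calc |(Q ^ k) i j| ≤ ‖Matrix.toEuclideanCLM (𝕜 := ℂ) (n := Fin n)
          ((Q ^ k).map Complex.ofReal)‖ := abs_entry_le_opNorm _ i j
      _ = ‖T ^ k‖ := by rw [hTk]
      _ ≤ c ^ k := hk
  have hsumEntry : ∀ i j, Summable fun k : ℕ => (Q ^ k) i j := by
    intro i j
    apply Summable.of_norm_bounded_eventually_nat (g := fun k => c ^ k)
      (summable_geometric_of_lt_one hc0.le hc1)
    filter_upwards [hentry] with k hk
    exact hk i j
  have hsum : Summable fun k : ℕ => Q ^ k :=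
    Pi.summable.mpr fun i => Pi.summable.mpr fun j => hsumEntry i j
  set B : Matrix (Fin n) (Fin n) ℝ := ∑' k : ℕ, Q ^ k with hBdef
  have hBnn : ∀ i j, 0 ≤ B i j := by
    intro i j
    have h1 : B i j = ∑' k : ℕ, (Q ^ k) i j := by
      rw [hBdef]
      exact (congrFun (tsum_apply (f := fun k : ℕ => (Q ^ k : Fin n → Fin n → ℝ)) (x := i) hsum) j).trans
        (tsum_apply (x := j) (Pi.summable.mp hsum i))
    rw [h1]
    exact tsum_nonneg fun k => hQpow k i j
  have hQN0 : Tendsto (fun N : ℕ => Q ^ N) atTop (𝓝 0) := hsum.tendsto_atTop_zero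
  have hgeom : ∀ N : ℕ, (1 - Q) * (∑ k ∈ Finset.range N, Q ^ k) = 1 - Q ^ N := by
    intro N
    induction N with
    | zero => simp
    | succ N ih =>
      rw [Finset.sum_range_succ, mul_add, ih, sub_mul, one_mul, ← pow_succ']
      abel
  have hgeom' : ∀ N : ℕ, (∑ k ∈ Finset.range N, Q ^ k) * (1 - Q) = 1 - Q ^ N := by
    intro N
    induction N with
    | zero => simp
    | succ N ih =>
      rw [Finset.sum_range_succ, add_mul, ih, mul_sub, mul_one, ← pow_succ]
      abel
  have hps := hsum.hasSum.tendsto_sum_nat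
  have h1 : (1 - Q) * B = 1 := by
    have hl : Tendsto (fun N : ℕ => (1 - Q) * ∑ k ∈ Finset.range N, Q ^ k) atTop
        (𝓝 ((1 - Q) * B)) := (Continuous.matrix_mul continuous_const continuous_id).tendsto B
        |>.comp hps
    have hr : Tendsto (fun N : ℕ => (1 - Q) * ∑ k ∈ Finset.range N, Q ^ k) atTop (𝓝 1) := by
      simp only [hgeom]
      simpa using tendsto_const_nhds.sub hQN0
    exact tendsto_nhds_unique hl hr
  have h2 : B * (1 - Q) = 1 := by
    have hl : Tendsto (fun N : ℕ => (∑ k ∈ Finset.range N, Q ^ k) * (1 - Q)) atTop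
        (𝓝 (B * (1 - Q))) := (Continuous.matrix_mul continuous_id continuous_const).tendsto B
        |>.comp hps
    have hr : Tendsto (fun N : ℕ => (∑ k ∈ Finset.range N, Q ^ k) * (1 - Q)) atTop (𝓝 1) := by
      simp only [hgeom']
      simpa using tendsto_const_nhds.sub hQN0
    exact tendsto_nhds_unique hl hr
  have hfact : t • (1 : Matrix (Fin n) (Fin n) ℝ) - P = t • (1 - Q) := by
    rw [smul_sub, hQdef, smul_smul, mul_inv_cancel₀ ht0.ne', one_smul]
  have hright : (t • (1 : Matrix (Fin n) (Fin n) ℝ) - P) * (t⁻¹ • B) = 1 := by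
    rw [hfact, Matrix.smul_mul, Matrix.mul_smul, smul_smul, mul_inv_cancel₀ ht0.ne', one_smul, h1]
  refine ⟨Matrix.isUnit_det_of_right_inverse hright, ?_⟩
  have hinv : (t • (1 : Matrix (Fin n) (Fin n) ℝ) - P)⁻¹ = t⁻¹ • B :=
    Matrix.inv_eq_right_inv hright
  intro i j
  rw [hinv]
  exact mul_nonneg (inv_nonneg.mpr ht0.le) (hBnn i j)

lemma specRad_nonneg {n : ℕ} (hn : 0 < n) (A : Matrix (Fin n) (Fin n) ℝ) : 0 ≤ specRad A := by
  haveI : Nonempty (Fin n) := ⟨⟨0, hn⟩⟩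
  haveI : Nontrivial (EuclideanSpace ℂ (Fin n) →L[ℂ] EuclideanSpace ℂ (Fin n)) := by
    refine ⟨1, 0, fun h => ?_⟩
    have := congrFun (congrArg DFunLike.coe h) (EuclideanSpace.single ⟨0, hn⟩ (1:ℂ))
    simp only [ContinuousLinearMap.one_apply, ContinuousLinearMap.zero_apply] at this
    have h1 : (EuclideanSpace.single ⟨0, hn⟩ (1:ℂ) : EuclideanSpace ℂ (Fin n)) ⟨0, hn⟩
        = (0 : EuclideanSpace ℂ (Fin n)) ⟨0, hn⟩ := by rw [this]
    rw [EuclideanSpace.single_apply] at h1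
    simp at h1
  obtain ⟨μ, hμ⟩ := spectrum.nonempty
    (Matrix.toEuclideanCLM (𝕜 := ℂ) (n := Fin n) (A.map Complex.ofReal))
  rw [AlgEquiv.spectrum_eq (Matrix.toEuclideanCLM (𝕜 := ℂ) (n := Fin n))] at hμ
  exact le_trans (norm_nonneg μ) (norm_le_specRad A hμ)

lemma inv_entries_nonneg {n : ℕ} (hn : 0 < n) (M : Matrix (Fin n) (Fin n) ℝ)
    (hM : IsNsMMat M) : ∀ i j, 0 ≤ M⁻¹ i j := by
  obtain ⟨⟨s, P, hPnn, hρs, hMeq⟩, hdet⟩ := hM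
  have hρ0 : 0 ≤ specRad P := specRad_nonneg hn P
  intro i j
  -- the matrix-valued perturbation
  set g : ℝ → Matrix (Fin n) (Fin n) ℝ := fun ε => M + ε • (1 : Matrix (Fin n) (Fin n) ℝ)
    with hgdef
  have hgform : ∀ ε : ℝ, g ε = (s + ε) • (1 : Matrix (Fin n) (Fin n) ℝ) - P := by
    intro ε
    rw [hgdef]
    simp only [hMeq, add_smul]
    abel
  have hgnn : ∀ ε : ℝ, 0 < ε → (IsUnit (g ε).det ∧ ∀ i j, 0 ≤ (g ε)⁻¹ i j) := by
    intro ε hε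
    rw [hgform]
    exact neumann P hPnn (by linarith) (by linarith)
  have hdet0 : (g 0).det ≠ 0 := by
    rw [hgdef]
    simp only [zero_smul, add_zero]
    exact IsUnit.ne_zero hdet
  have hgcont : Continuous g := by
    rw [hgdef]
    exact continuous_const.add (continuous_id.smul continuous_const)
  set f : ℝ → ℝ := fun ε => ((g ε).det)⁻¹ * (g ε).adjugate i j with hfdef
  have hfinv : ∀ ε : ℝ, (g ε)⁻¹ i j = f ε := by
    intro ε
    rw [hfdef, Matrix.inv_def, Ring.inverse_eq_inv']
    simp [Matrix.smul_apply, smul_eq_mul]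
  have hfcont : ContinuousAt f 0 :=
    ContinuousAt.mul (hgcont.matrix_det.continuousAt.inv₀ hdet0)
      (((continuous_apply j).comp ((continuous_apply i).comp
        hgcont.matrix_adjugate)).continuousAt)
  have hle : 0 ≤ f 0 := by
    have htend : Tendsto f (𝓝[>] (0:ℝ)) (𝓝 (f 0)) := hfcont.tendsto.mono_left nhdsWithin_le_nhds
    apply ge_of_tendsto htend
    filter_upwards [self_mem_nhdsWithin] with ε hε
    rw [← hfinv ε]
    exact (hgnn ε hε).2 i j
  have : M⁻¹ i j = f 0 := by
    rw [← hfinv 0]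
    congr 2
    rw [hgdef]
    simp
  rw [this]
  exact hle

/-- Under Condition A1, the fixed-point iterates `x₀ = 0`,
`x_{k+1} = M⁻¹(a + b(x_k,x_k))` are entrywise nondecreasing and converge to a limit
`x* ≥ 0` which solves the QVE and is below every nonnegative solution:
the QVE has a minimal nonnegative solution. -/
theorem qve_minimal_solution_of_A1 {n : ℕ} (M : Matrix (Fin n) (Fin n) ℝ)
    (hM : IsNsMMat M) (a : Fin n → ℝ) (ha : 0 ≤ a)
    (b : (Fin n → ℝ) →ₗ[ℝ] (Fin n → ℝ) →ₗ[ℝ] (Fin n → ℝ))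
    (hb : ∀ x y : Fin n → ℝ, 0 ≤ x → 0 ≤ y → 0 ≤ b x y)
    (hA1 : ∃ (m : ℕ) (l : (Fin n → ℝ) →ₗ[ℝ] (Fin m → ℝ)) (z : Fin m → ℝ),
      WeaklyPos l ∧ 0 ≤ z ∧
        ∀ x : Fin n → ℝ, 0 ≤ x → l x ≤ z → l (M⁻¹ *ᵥ (a + b x x)) ≤ z)
    (x : ℕ → Fin n → ℝ) (hx0 : x 0 = 0)
    (hrec : ∀ k, x (k + 1) = M⁻¹ *ᵥ (a + b (x k) (x k))) :
    Monotone x ∧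
      ∃ xs : Fin n → ℝ, Tendsto x atTop (𝓝 xs) ∧ 0 ≤ xs ∧
        M *ᵥ xs = a + b xs xs ∧
        ∀ s : Fin n → ℝ, 0 ≤ s → M *ᵥ s = a + b s s → xs ≤ s := by
  rcases Nat.eq_zero_or_pos n with hn | hn
  · -- trivial case: the space is a subsingleton
    subst hn
    haveI : Subsingleton (Fin 0 → ℝ) := ⟨fun u v => funext fun i => absurd i.2 (by omega)⟩
    refine ⟨fun i j _ => le_of_eq (Subsingleton.elim _ _), 0, ?_, le_of_eq rfl,
      Subsingleton.elim _ _, fun s _ _ => le_of_eq (Subsingleton.elim _ _)⟩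
    have hx : x = fun _ => 0 := funext fun k => Subsingleton.elim _ _
    rw [hx]
    exact tendsto_const_nhds
  have hinv := inv_entries_nonneg hn M hM
  have hdet := hM.2
  -- monotonicity of M⁻¹ *ᵥ ·
  have hmv : ∀ u v : Fin n → ℝ, u ≤ v → M⁻¹ *ᵥ u ≤ M⁻¹ *ᵥ v := by
    intro u v huv i
    simp only [Matrix.mulVec, dotProduct]
    exact Finset.sum_le_sum fun j _ => mul_le_mul_of_nonneg_left (huv j) (hinv i j)
  have hmv0 : ∀ u : Fin n → ℝ, 0 ≤ u → 0 ≤ M⁻¹ *ᵥ u := by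
    intro u hu
    have := hmv 0 u hu
    rwa [Matrix.mulVec_zero] at this
  -- nonnegativity of the iterates
  have hxnn : ∀ k, 0 ≤ x k := by
    intro k
    induction k with
    | zero => rw [hx0]
    | succ k ih =>
      rw [hrec k]
      exact hmv0 _ (le_trans ha (le_add_of_nonneg_right (hb _ _ ih ih)))
  -- b is monotone along nonneg increasing args
  have hbmono : ∀ u v : Fin n → ℝ, 0 ≤ u → u ≤ v → b u u ≤ b v v := by
    intro u v hu huv
    have hvu : 0 ≤ v - u := fun i => by simpa using huv i
    have hv : 0 ≤ v := le_trans hu huv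
    have key : b v v - b u u = b (v - u) v + b u (v - u) := by
      simp only [map_sub, LinearMap.sub_apply]
      abel
    have : 0 ≤ b v v - b u u := by
      rw [key]
      exact add_nonneg (hb _ _ hvu hv) (hb _ _ hu hvu)
    intro i
    have := this i
    simp only [Pi.sub_apply, Pi.zero_apply] at this
    linarith
  -- monotone
  have hstep : ∀ k, x k ≤ x (k + 1) := by
    intro k
    induction k with
    | zero =>
      rw [hx0, hrec 0, hx0]
      exact hmv0 _ (le_trans ha (le_add_of_nonneg_right (hb _ _ le_rfl le_rfl)))
    | succ k ih =>
      rw [hrec k, hrec (k + 1)]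
      exact hmv _ _ (fun i => by
        have := hbmono (x k) (x (k+1)) (hxnn k) ih i
        simpa using this)
  have hmono : Monotone x := monotone_nat_of_le_succ hstep
  refine ⟨hmono, ?_⟩
  -- the linear bound from A1
  obtain ⟨m, l, z, hlpos, hz, hlstep⟩ := hA1
  have hlnn : ∀ u : Fin n → ℝ, 0 ≤ u → 0 ≤ l u := by
    intro u hu
    by_cases h : u = 0
    · subst h; rw [map_zero]
    · exact (hlpos u hu h).1
  have hlz : ∀ k, l (x k) ≤ z := by
    intro k
    induction k with
    | zero => rw [hx0, map_zero]; exact hz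
    | succ k ih =>
      rw [hrec k]
      exact hlstep (x k) (hxnn k) ih
  -- coordinatewise boundedness
  have hbdd : ∀ i, BddAbove (Set.range fun k => x k i) := by
    intro i
    have hei : (0:Fin n → ℝ) ≤ Pi.single i 1 := by
      intro j
      by_cases h : j = i <;> simp [Pi.single_apply, h]
    have heine : (Pi.single i 1 : Fin n → ℝ) ≠ 0 := by
      intro h
      have := congrFun h i
      simp at this
    obtain ⟨hle0, hlne⟩ := hlpos _ hei heine
    obtain ⟨j, hj⟩ : ∃ j, 0 < l (Pi.single i 1) j := by
      by_contra h
      push_neg at h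
      exact hlne (funext fun j => le_antisymm (h j) (hle0 j))
    refine ⟨z j / l (Pi.single i 1) j, ?_⟩
    rintro r ⟨k, rfl⟩
    rw [le_div_iff₀ hj]
    have h1 : x k i • (Pi.single i (1:ℝ) : Fin n → ℝ) ≤ x k := by
      intro j'
      by_cases h : j' = i
      · subst h; simp
      · simp [Pi.single_apply, h]
        exact hxnn k j'
    have h2 : l (x k i • (Pi.single i (1:ℝ) : Fin n → ℝ)) ≤ l (x k) := by
      have hd : 0 ≤ l (x k - x k i • (Pi.single i (1:ℝ) : Fin n → ℝ)) :=
        hlnn _ (fun j' => by simpa using h1 j')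
      rw [map_sub] at hd
      intro j'
      have := hd j'
      simp only [Pi.sub_apply, Pi.zero_apply] at this
      linarith
    have h3 := h2 j
    rw [_root_.map_smul] at h3
    simp only [Pi.smul_apply, smul_eq_mul] at h3
    exact le_trans h3 (hlz k j)
  -- convergence
  set xs : Fin n → ℝ := fun i => ⨆ k, x k i with hxs
  have htend1 : ∀ i, Tendsto (fun k => x k i) atTop (𝓝 (xs i)) := fun i =>
    tendsto_atTop_ciSup (fun p q hpq => hmono hpq i) (hbdd i)
  have htend : Tendsto x atTop (𝓝 xs) := tendsto_pi_nhds.mpr htend1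
  have hxsnn : 0 ≤ xs := fun i =>
    ge_of_tendsto (htend1 i) (Eventually.of_forall fun k => hxnn k i)
  -- continuity of v ↦ M⁻¹ *ᵥ (a + b v v)
  have hbform : ∀ v w : Fin n → ℝ, b v w =
      ∑ p : Fin n, ∑ q : Fin n, (v p * w q) • b (Pi.single p (1:ℝ) : Fin n → ℝ) (Pi.single q (1:ℝ) : Fin n → ℝ) := by
    intro v w
    have hv : v = ∑ p : Fin n, v p • (Pi.single p (1:ℝ) : Fin n → ℝ) := by
      ext j
      rw [Finset.sum_apply]
      simp [Pi.single_apply]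
    conv_lhs => rw [hv]
    rw [map_sum]
    simp only [LinearMap.sum_apply, _root_.map_smul]
    refine Finset.sum_congr rfl fun p _ => ?_
    have hw : w = ∑ q : Fin n, w q • (Pi.single q (1:ℝ) : Fin n → ℝ) := by
      ext j
      rw [Finset.sum_apply]
      simp [Pi.single_apply]
    conv_lhs => rw [hw]
    rw [LinearMap.smul_apply, map_sum, Finset.smul_sum]
    refine Finset.sum_congr rfl fun q _ => ?_
    rw [_root_.map_smul, smul_smul]
  have hbc : Continuous fun v : Fin n → ℝ => b v v := by
    have : (fun v : Fin n → ℝ => b v v) = fun v =>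
        ∑ p : Fin n, ∑ q : Fin n, (v p * v q) • b (Pi.single p (1:ℝ) : Fin n → ℝ) (Pi.single q (1:ℝ) : Fin n → ℝ) := by
      funext v; exact hbform v v
    rw [this]
    refine continuous_finset_sum _ fun p _ => continuous_finset_sum _ fun q _ => ?_
    exact (((continuous_apply p).mul (continuous_apply q)).smul continuous_const)
  have hmvc : Continuous fun v : Fin n → ℝ => M⁻¹ *ᵥ v :=
    continuous_const.matrix_mulVec continuous_id
  have hfc : Continuous fun v : Fin n → ℝ => M⁻¹ *ᵥ (a + b v v) :=
    hmvc.comp (continuous_const.add hbc)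
  have htend2 : Tendsto (fun k => x (k + 1)) atTop (𝓝 xs) :=
    htend.comp (tendsto_add_atTop_nat 1)
  have htend3 : Tendsto (fun k => M⁻¹ *ᵥ (a + b (x k) (x k))) atTop
      (𝓝 (M⁻¹ *ᵥ (a + b xs xs))) := (hfc.tendsto xs).comp htend
  have hfix : xs = M⁻¹ *ᵥ (a + b xs xs) := by
    refine tendsto_nhds_unique htend2 ?_
    have : (fun k => x (k + 1)) = fun k => M⁻¹ *ᵥ (a + b (x k) (x k)) := funext hrec
    rw [this]
    exact htend3
  have hsol : M *ᵥ xs = a + b xs xs := by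
    conv_lhs => rw [hfix]
    rw [Matrix.mulVec_mulVec, Matrix.mul_nonsing_inv M hdet, Matrix.one_mulVec]
  refine ⟨xs, htend, hxsnn, hsol, ?_⟩
  intro s hs hsols
  have hks : ∀ k, x k ≤ s := by
    intro k
    induction k with
    | zero => rw [hx0]; exact hs
    | succ k ih =>
      rw [hrec k]
      have h1 : a + b (x k) (x k) ≤ a + b s s := by
        intro i
        have := hbmono (x k) s (hxnn k) ih i
        simp only [Pi.add_apply]
        linarith
      calc M⁻¹ *ᵥ (a + b (x k) (x k)) ≤ M⁻¹ *ᵥ (a + b s s) := hmv _ _ h1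
        _ = M⁻¹ *ᵥ (M *ᵥ s) := by rw [hsols]
        _ = s := by rw [Matrix.mulVec_mulVec, Matrix.nonsing_inv_mul M hdet, Matrix.one_mulVec]
  intro i
  exact le_of_tendsto (htend1 i) (Eventually.of_forall fun k => hks k i)
end

section
/- Let A, B, C be m×m real matrices with A, B, C ≥ 0 entrywise, (A + B + C)e = e where e is the all-ones vector, and I − B nonsingular. Then for every m×m matrix X with X ≥ 0 and Xe ≤ e, the matrix X' := (I − B)⁻¹(A + C X²) satisfies X'e ≤ e. Consequently, the iterates X₀ = 0, X_{k+1} = (I − B)⁻¹(A + C X_k²) satisfy X_k e ≤ e for all k. -/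
open Matrix Filter Set Topology

section Aux

attribute [local instance] Matrix.linftyOpNormedRing Matrix.linftyOpNormedAlgebra

variable {m : ℕ}

private lemma mul_entries_nonneg' {M N : Matrix (Fin m) (Fin m) ℝ}
    (hM : ∀ i j, 0 ≤ M i j) (hN : ∀ i j, 0 ≤ N i j) : ∀ i j, 0 ≤ (M * N) i j := by
  intro i j
  rw [Matrix.mul_apply]
  exact Finset.sum_nonneg fun k _ => mul_nonneg (hM i k) (hN k j)

private lemma pow_entries_nonneg' {M : Matrix (Fin m) (Fin m) ℝ}
    (hM : ∀ i j, 0 ≤ M i j) : ∀ n, ∀ i j, 0 ≤ (M ^ n) i j := by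
  intro n
  induction n with
  | zero =>
    intro i j
    rw [pow_zero, Matrix.one_apply]
    split <;> norm_num
  | succ k ih => rw [pow_succ]; exact mul_entries_nonneg' ih hM

private lemma mulVec_mono' {M : Matrix (Fin m) (Fin m) ℝ}
    (hM : ∀ i j, 0 ≤ M i j) {x y : Fin m → ℝ} (h : x ≤ y) : M *ᵥ x ≤ M *ᵥ y := by
  intro i
  simp only [Matrix.mulVec, dotProduct]
  exact Finset.sum_le_sum fun j _ => mul_le_mul_of_nonneg_left (h j) (hM i j)

private lemma norm_le_one_of_rows' {B : Matrix (Fin m) (Fin m) ℝ}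
    (hB : ∀ i j, 0 ≤ B i j) (hBe : B *ᵥ (1 : Fin m → ℝ) ≤ 1) : ‖B‖ ≤ 1 := by
  rw [Matrix.linfty_opNorm_def]
  rw [show (1:ℝ) = ((1 : NNReal) : ℝ) by simp, NNReal.coe_le_coe]
  apply Finset.sup_le
  intro i _
  rw [← NNReal.coe_le_coe]
  push_cast
  calc (∑ j, (‖B i j‖₊ : ℝ)) = ∑ j, B i j := by
        refine Finset.sum_congr rfl fun j _ => ?_
        rw [coe_nnnorm, Real.norm_eq_abs, abs_of_nonneg (hB i j)]
    _ ≤ 1 := by simpa [Matrix.mulVec, dotProduct] using hBe i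

private lemma entry_continuous' (i j : Fin m) :
    Continuous (fun M : Matrix (Fin m) (Fin m) ℝ => M i j) := by
  let g : Matrix (Fin m) (Fin m) ℝ →ₗ[ℝ] ℝ :=
    { toFun := fun M => M i j
      map_add' := fun _ _ => rfl
      map_smul' := fun _ _ => rfl }
  exact g.continuous_of_finiteDimensional

private lemma complete' : CompleteSpace (Matrix (Fin m) (Fin m) ℝ) :=
  FiniteDimensional.complete ℝ _

attribute [local instance] complete'

/-- Key M-matrix fact: `B ≥ 0`, `B e ≤ e`, `det (I - B)` a unit imply `(I-B)⁻¹ ≥ 0`. -/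
lemma inv_one_sub_entries_nonneg {B : Matrix (Fin m) (Fin m) ℝ}
    (hB : ∀ i j, 0 ≤ B i j) (hBe : B *ᵥ (1 : Fin m → ℝ) ≤ 1)
    (hns : IsUnit (1 - B).det) : ∀ i j, 0 ≤ (1 - B)⁻¹ i j := by
  intro i j
  rw [Matrix.nonsing_inv_eq_ringInverse]
  have hnorm := norm_le_one_of_rows' hB hBe
  -- Step 1: for t ∈ (0,1) the entries of `Ring.inverse (1 - t • B)` are nonnegative
  have h1 : ∀ t : ℝ, t ∈ Ioo (0:ℝ) 1 → 0 ≤ Ring.inverse (1 - t • B) i j := by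
    intro t ht
    have hlt : ‖t • B‖ < 1 := by
      rw [norm_smul, Real.norm_eq_abs, abs_of_nonneg ht.1.le]
      calc t * ‖B‖ ≤ t * 1 := by nlinarith [ht.1.le]
        _ < 1 := by linarith [ht.2]
    have hs := hasSum_geom_series_inverse (t • B) hlt
    have htend := ((entry_continuous' i j).tendsto _).comp hs.tendsto_sum_nat
    refine ge_of_tendsto htend (Eventually.of_forall fun n => ?_)
    have htB : ∀ a b, 0 ≤ (t • B) a b := fun a b =>
      mul_nonneg ht.1.le (hB a b)
    simp only [Function.comp_apply, Matrix.sum_apply]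
    exact Finset.sum_nonneg fun k _ => pow_entries_nonneg' htB k i j
  -- Step 2: pass to the limit t → 1⁻
  have hu : IsUnit (1 - B) := (Matrix.isUnit_iff_isUnit_det _).mpr hns
  obtain ⟨u, hu'⟩ := hu
  have hc : ContinuousAt Ring.inverse ((1 : Matrix (Fin m) (Fin m) ℝ) - B) := by
    rw [← hu']; exact NormedRing.inverse_continuousAt u
  have hline : Continuous (fun t : ℝ => (1 : Matrix (Fin m) (Fin m) ℝ) - t • B) :=
    continuous_const.sub (continuous_id.smul continuous_const)
  have hc1 : ContinuousAt (fun t : ℝ => Ring.inverse ((1 : Matrix (Fin m) (Fin m) ℝ) - t • B)) 1 := by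
    have h1 : ((1 : Matrix (Fin m) (Fin m) ℝ) - B) = (fun t : ℝ => (1 : Matrix (Fin m) (Fin m) ℝ) - t • B) 1 := by simp
    exact ContinuousAt.comp (h1 ▸ hc) hline.continuousAt
  have hcomp : ContinuousAt
      (fun t : ℝ => Ring.inverse ((1 : Matrix (Fin m) (Fin m) ℝ) - t • B) i j) 1 :=
    (entry_continuous' i j).continuousAt.comp hc1
  have htend : Tendsto (fun t : ℝ => Ring.inverse ((1 : Matrix (Fin m) (Fin m) ℝ) - t • B) i j)
      (𝓝[<] (1:ℝ)) (𝓝 (Ring.inverse ((1 : Matrix (Fin m) (Fin m) ℝ) - B) i j)) := by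
    have := hcomp.tendsto.mono_left (nhdsWithin_le_nhds (s := Iio (1:ℝ)))
    simpa using this
  refine ge_of_tendsto htend ?_
  filter_upwards [Ioo_mem_nhdsLT_of_mem (show (1:ℝ) ∈ Ioc (0:ℝ) 1 by norm_num)] with t ht
  exact h1 t ht

end Aux

/-- For the unilateral quadratic matrix equation `X = A + B X + C X²` with
`A, B, C ≥ 0`, `(A+B+C) e = e` and `I - B` nonsingular: every `X ≥ 0` with `X e ≤ e`
yields `X' = (I-B)⁻¹(A + C X²)` with `X' e ≤ e`; consequently the fixed-point iterates
starting from `X₀ = 0` satisfy `X_k e ≤ e` for all `k`. -/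
theorem unilateral_iterates_bounded {m : ℕ} (A B C : Matrix (Fin m) (Fin m) ℝ)
    (hA : ∀ i j, 0 ≤ A i j) (hB : ∀ i j, 0 ≤ B i j) (hC : ∀ i j, 0 ≤ C i j)
    (hstoch : (A + B + C) *ᵥ (1 : Fin m → ℝ) = (1 : Fin m → ℝ))
    (hns : IsUnit (1 - B).det) :
    (∀ X : Matrix (Fin m) (Fin m) ℝ, (∀ i j, 0 ≤ X i j) →
      X *ᵥ (1 : Fin m → ℝ) ≤ (1 : Fin m → ℝ) →
      ((1 - B)⁻¹ * (A + C * X ^ 2)) *ᵥ (1 : Fin m → ℝ) ≤ (1 : Fin m → ℝ)) ∧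
    (∀ X : ℕ → Matrix (Fin m) (Fin m) ℝ, X 0 = 0 →
      (∀ k, X (k + 1) = (1 - B)⁻¹ * (A + C * (X k) ^ 2)) →
      ∀ k, X k *ᵥ (1 : Fin m → ℝ) ≤ (1 : Fin m → ℝ)) := by
  have hsplit : A *ᵥ (1 : Fin m → ℝ) + B *ᵥ 1 + C *ᵥ 1 = 1 := by
    rw [← Matrix.add_mulVec, ← Matrix.add_mulVec]; exact hstoch
  have hAe : (0 : Fin m → ℝ) ≤ A *ᵥ 1 := by
    intro i
    simp only [Pi.zero_apply, Matrix.mulVec, dotProduct, Pi.one_apply]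
    exact Finset.sum_nonneg fun j _ => mul_nonneg (hA i j) zero_le_one
  have hCe : (0 : Fin m → ℝ) ≤ C *ᵥ 1 := by
    intro i
    simp only [Pi.zero_apply, Matrix.mulVec, dotProduct, Pi.one_apply]
    exact Finset.sum_nonneg fun j _ => mul_nonneg (hC i j) zero_le_one
  have hBe : B *ᵥ (1 : Fin m → ℝ) ≤ 1 := by
    intro i
    have := congrFun hsplit i
    simp only [Pi.add_apply, Pi.one_apply] at this ⊢
    have := hAe i; have := hCe i
    simp only [Pi.zero_apply] at *
    linarith [congrFun hsplit i]
  have hinv := inv_one_sub_entries_nonneg hB hBe hns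
  -- (1 - B) *ᵥ 1 = A *ᵥ 1 + C *ᵥ 1
  have hone : ((1 : Matrix (Fin m) (Fin m) ℝ) - B) *ᵥ 1 = A *ᵥ 1 + C *ᵥ 1 := by
    rw [Matrix.sub_mulVec, Matrix.one_mulVec]
    funext i
    have := congrFun hsplit i
    simp only [Pi.add_apply, Pi.one_apply, Pi.sub_apply] at this ⊢
    linarith
  have main : ∀ X : Matrix (Fin m) (Fin m) ℝ, (∀ i j, 0 ≤ X i j) →
      X *ᵥ (1 : Fin m → ℝ) ≤ (1 : Fin m → ℝ) →
      ((1 - B)⁻¹ * (A + C * X ^ 2)) *ᵥ (1 : Fin m → ℝ) ≤ (1 : Fin m → ℝ) := by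
    intro X hX hXe
    have hX2 : (X ^ 2) *ᵥ (1 : Fin m → ℝ) ≤ 1 := by
      rw [pow_two, ← Matrix.mulVec_mulVec]
      exact le_trans (mulVec_mono' hX hXe) hXe
    have hstep : (A + C * X ^ 2) *ᵥ (1 : Fin m → ℝ) ≤ ((1 : Matrix (Fin m) (Fin m) ℝ) - B) *ᵥ 1 := by
      rw [Matrix.add_mulVec, hone, ← Matrix.mulVec_mulVec]
      exact add_le_add le_rfl (le_trans (mulVec_mono' hC hX2) le_rfl)
    calc ((1 - B)⁻¹ * (A + C * X ^ 2)) *ᵥ (1 : Fin m → ℝ)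
        = (1 - B)⁻¹ *ᵥ ((A + C * X ^ 2) *ᵥ 1) := by rw [← Matrix.mulVec_mulVec]
      _ ≤ (1 - B)⁻¹ *ᵥ (((1 : Matrix (Fin m) (Fin m) ℝ) - B) *ᵥ 1) := mulVec_mono' hinv hstep
      _ = ((1 - B)⁻¹ * (1 - B)) *ᵥ 1 := by rw [Matrix.mulVec_mulVec]
      _ = 1 := by rw [Matrix.nonsing_inv_mul _ hns, Matrix.one_mulVec]
  refine ⟨main, ?_⟩
  intro X h0 hrec k
  have strong : ∀ k, (∀ i j, 0 ≤ X k i j) ∧ X k *ᵥ (1 : Fin m → ℝ) ≤ 1 := by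
    intro k
    induction k with
    | zero =>
      rw [h0]
      constructor
      · intro i j; simp
      · intro i; simp [Matrix.mulVec]
    | succ n ih =>
      rw [hrec n]
      constructor
      · refine mul_entries_nonneg' hinv fun i j => ?_
        have := mul_entries_nonneg' hC (pow_entries_nonneg' ih.1 2) i j
        simpa using add_nonneg (hA i j) this
      · exact main _ ih.1 ih.2
  exact (strong k).2
end
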